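/- Let m_nd be a G-antisymmetric real 4×4 matrix (m_ndᵀG + G m_nd = 0), let d₁, d₂, d₃ ≥ 0, let m_d = diag(d₁+d₂+d₃, d₁−d₂−d₃, −d₁+d₂−d₃, −d₁−d₂+d₃) be the type-I canonical depolarizing differential Mueller matrix, and let s : ℝ → ℝ⁴ be a differentiable curve satisfying s′(z) = (m_nd + m_d) · s(z) and such that s(z) is an admissible Stokes vector for every z. Then the Minkowski metric z ↦ s(z)ᵀ G s(z) is nondecreasing on ℝ; equivalently, the Shannon entropy of the beam cannot decrease under such a depolarizing propagation. -/

import Mathlib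

open Matrix

set_option maxHeartbeats 1000000

/-- The Minkowski metric matrix G = diag(1, -1, -1, -1). -/
noncomputable def G : Matrix (Fin 4) (Fin 4) ℝ := Matrix.diagonal ![1, -1, -1, -1]

/-- A Stokes vector is admissible if s₀ ≥ 0 and sᵀGs ≥ 0. -/
def StokesAdmissible (s : Fin 4 → ℝ) : Prop := 0 ≤ s 0 ∧ 0 ≤ s ⬝ᵥ G.mulVec s

/-- Under propagation governed by m = m_nd + m_d, with m_nd G-antisymmetric and m_d the
type-I canonical depolarizing differential Mueller matrix with nonnegative parameters,
the Minkowski metric of an admissible Stokes curve is nondecreasing (the Shannon entropy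
of the beam cannot decrease). -/
theorem minkowski_monotone_of_depolarizing_propagation
    (m_nd : Matrix (Fin 4) (Fin 4) ℝ) (hnd : m_ndᵀ * G + G * m_nd = 0)
    (d₁ d₂ d₃ : ℝ) (h₁ : 0 ≤ d₁) (h₂ : 0 ≤ d₂) (h₃ : 0 ≤ d₃)
    (m_d : Matrix (Fin 4) (Fin 4) ℝ)
    (hd : m_d = Matrix.diagonal ![d₁ + d₂ + d₃, d₁ - d₂ - d₃, -d₁ + d₂ - d₃, -d₁ - d₂ + d₃])
    (s : ℝ → Fin 4 → ℝ)
    (hs : ∀ z : ℝ, HasDerivAt s ((m_nd + m_d).mulVec (s z)) z)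
    (hadm : ∀ z : ℝ, StokesAdmissible (s z)) :
    Monotone fun z => s z ⬝ᵥ G.mulVec (s z) := by
  set f : ℝ → ℝ := fun z => s z ⬝ᵥ G.mulVec (s z) with hf
  have hfe : f = fun z => (s z 0)^2 - (s z 1)^2 - (s z 2)^2 - (s z 3)^2 := by
    funext z
    simp only [hf, G, dotProduct, Matrix.mulVec_diagonal, Fin.sum_univ_four,
      Matrix.cons_val_zero, Matrix.cons_val_one, Matrix.head_cons]
    norm_num [Matrix.cons_val_two, Matrix.cons_val_three, Matrix.tail_cons, Matrix.head_cons, Fin.ext_iff, show ((3:Fin 4):ℕ) = 3 from rfl, show ((2:Fin 4):ℕ) = 2 from rfl]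
    ring
  set D : ℝ → ℝ := fun z =>
    2 * (s z 0 * ((m_nd + m_d).mulVec (s z) 0)) -
    2 * (s z 1 * ((m_nd + m_d).mulVec (s z) 1)) -
    2 * (s z 2 * ((m_nd + m_d).mulVec (s z) 2)) -
    2 * (s z 3 * ((m_nd + m_d).mulVec (s z) 3)) with hD
  have hderiv : ∀ z, HasDerivAt f (D z) z := by
    intro z
    have hi : ∀ i, HasDerivAt (fun z => s z i) ((m_nd + m_d).mulVec (s z) i) z :=
      hasDerivAt_pi.mp (hs z)
    rw [hfe]
    have h0 : HasDerivAt (fun z => s z 0 ^ 2) _ z := (hi 0).fun_pow 2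
    have h1 : HasDerivAt (fun z => s z 1 ^ 2) _ z := (hi 1).fun_pow 2
    have h2 : HasDerivAt (fun z => s z 2 ^ 2) _ z := (hi 2).fun_pow 2
    have h3 : HasDerivAt (fun z => s z 3 ^ 2) _ z := (hi 3).fun_pow 2
    refine (((h0.fun_sub h1).fun_sub h2).fun_sub h3).congr_deriv ?_
    simp only [hD]; ring
  have hDnn : ∀ z, 0 ≤ D z := by
    intro z
    obtain ⟨hs0, hGs⟩ := hadm z
    have hGs' : (s z 1)^2 + (s z 2)^2 + (s z 3)^2 ≤ (s z 0)^2 := by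
      simp only [dotProduct, G, Matrix.mulVec_diagonal, Fin.sum_univ_four] at hGs
      norm_num [Matrix.cons_val_two, Matrix.cons_val_three, Matrix.tail_cons, Matrix.head_cons, Fin.ext_iff, show ((3:Fin 4):ℕ) = 3 from rfl,
        show ((2:Fin 4):ℕ) = 2 from rfl] at hGs
      nlinarith [hGs]
    have hrel : ∀ i j : Fin 4, (m_ndᵀ * G + G * m_nd) i j = 0 := by
      intro i j; rw [hnd]; rfl
    have e00 := hrel 0 0
    have e11 := hrel 1 1
    have e22 := hrel 2 2
    have e33 := hrel 3 3
    have e01 := hrel 0 1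
    have e02 := hrel 0 2
    have e03 := hrel 0 3
    have e12 := hrel 1 2
    have e13 := hrel 1 3
    have e23 := hrel 2 3
    simp only [Matrix.add_apply, Matrix.mul_apply, Matrix.transpose_apply, G,
      Matrix.diagonal_apply, Fin.sum_univ_four] at e00 e11 e22 e33 e01 e02 e03 e12 e13 e23
    norm_num [Matrix.cons_val_two, Matrix.cons_val_three, Matrix.tail_cons, Matrix.head_cons, Fin.ext_iff, show ((3:Fin 4):ℕ) = 3 from rfl, show ((2:Fin 4):ℕ) = 2 from rfl]
      at e00 e11 e22 e33 e01 e02 e03 e12 e13 e23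
    have hB1 : (0:ℝ) ≤ d₁ * ((s z 0)^2 - (s z 1)^2 + (s z 2)^2 + (s z 3)^2) :=
      mul_nonneg h₁ (by nlinarith [sq_nonneg (s z 2), sq_nonneg (s z 3)])
    have hB2 : (0:ℝ) ≤ d₂ * ((s z 0)^2 + (s z 1)^2 - (s z 2)^2 + (s z 3)^2) :=
      mul_nonneg h₂ (by nlinarith [sq_nonneg (s z 1), sq_nonneg (s z 3)])
    have hB3 : (0:ℝ) ≤ d₃ * ((s z 0)^2 + (s z 1)^2 + (s z 2)^2 - (s z 3)^2) :=
      mul_nonneg h₃ (by nlinarith [sq_nonneg (s z 1), sq_nonneg (s z 2)])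
    simp only [hD, hd, Matrix.add_mulVec, Matrix.mulVec_diagonal, mulVec, dotProduct,
      Fin.sum_univ_four, Pi.add_apply]
    norm_num [Matrix.cons_val_two, Matrix.cons_val_three, Matrix.tail_cons, Matrix.head_cons, Fin.ext_iff, show ((3:Fin 4):ℕ) = 3 from rfl, show ((2:Fin 4):ℕ) = 2 from rfl]
    have c00 : m_nd 0 0 * (s z 0 * s z 0) = 0 := by rw [e00]; ring
    have c11 : m_nd 1 1 * (s z 1 * s z 1) = 0 := by rw [e11]; ring
    have c22 : m_nd 2 2 * (s z 2 * s z 2) = 0 := by rw [e22]; ring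
    have c33 : m_nd 3 3 * (s z 3 * s z 3) = 0 := by rw [e33]; ring
    have c01 : (-m_nd 1 0 + m_nd 0 1) * (s z 0 * s z 1) = 0 := by rw [e01]; ring
    have c02 : (-m_nd 2 0 + m_nd 0 2) * (s z 0 * s z 2) = 0 := by rw [e02]; ring
    have c03 : (-m_nd 3 0 + m_nd 0 3) * (s z 0 * s z 3) = 0 := by rw [e03]; ring
    have c12 : (-m_nd 2 1 + -m_nd 1 2) * (s z 1 * s z 2) = 0 := by rw [e12]; ring
    have c13 : (-m_nd 3 1 + -m_nd 1 3) * (s z 1 * s z 3) = 0 := by rw [e13]; ring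
    have c23 : (-m_nd 3 2 + -m_nd 2 3) * (s z 2 * s z 3) = 0 := by rw [e23]; ring
    linarith [hB1, hB2, hB3, c00, c11, c22, c33, c01, c02, c03, c12, c13, c23]
  have hdiff : Differentiable ℝ f := fun z => (hderiv z).differentiableAt
  exact monotone_of_deriv_nonneg hdiff (fun z => by rw [(hderiv z).deriv]; exact hDnn z)
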